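/- Let D be a G-admissible divisor on H. Then for every vertex v of G, the divisor M_v(D) is G-admissible, and moreover M_v(D) = D + div_ℓ(χ_v; D), where χ_v : V(G) → ℤ is the characteristic function of {v}. -/

import Mathlib

open Finset
open scoped Classical

structure Multigraph (V E : Type) where
  tail : E → V
  head : E → V
  loopless : ∀ e, tail e ≠ head e

namespace Multigraph

variable {V E : Type}

/-- The simple graph of adjacency underlying a multigraph. -/
def adjG (G : Multigraph V E) : SimpleGraph V :=
  SimpleGraph.fromRel (fun u v => ∃ e, G.tail e = u ∧ G.head e = v)

/-- A multigraph is connected if its adjacency graph is. -/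
def Conn (G : Multigraph V E) : Prop := G.adjG.Connected

end Multigraph

variable {V E : Type} [Fintype V] [Fintype E] [DecidableEq V] [DecidableEq E]

/-- The vertex set of the subdivision `H` of `G`: the vertices of `G` together with,
for each edge `e`, the `ℓ e − 1` interior vertices `x_1^e, …, x_{ℓ_e − 1}^e` of the
subdivision of `e` (the pair `⟨e, j⟩` encodes `x_{j+1}^e`, indexed along the reference
orientation of `e`). -/
abbrev VH (V E : Type) (ℓ : E → ℕ) := V ⊕ (Σ e : E, Fin (ℓ e - 1))

/-- The vertex `x_j^e` of `H` (along the reference orientation of `e`),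
for `0 ≤ j ≤ ℓ e`. -/
def xv (G : Multigraph V E) (ℓ : E → ℕ) (e : E) (j : ℕ) : VH V E ℓ :=
  if h : j = 0 then Sum.inl (G.tail e)
  else if h2 : j < ℓ e then Sum.inr ⟨e, ⟨j - 1, by omega⟩⟩
  else Sum.inl (G.head e)

/-- The principal divisor `div(F)` on `H` of a function `F : V(H) → ℤ`; its value at a
vertex `w` is `ord_w(F) = Σ (F(u) − F(w))`, the sum being over the edges of `H` between
`u` and `w`. The edges of `H` are the pairs `{x_j^e, x_{j+1}^e}` for `0 ≤ j < ℓ e`. -/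
def divH (G : Multigraph V E) (ℓ : E → ℕ) (F : VH V E ℓ → ℤ) (w : VH V E ℓ) : ℤ :=
  ∑ e : E, ∑ j ∈ Finset.range (ℓ e),
    ((if xv G ℓ e j = w then F (xv G ℓ e (j + 1)) - F (xv G ℓ e j) else 0) +
     (if xv G ℓ e (j + 1) = w then F (xv G ℓ e j) - F (xv G ℓ e (j + 1)) else 0))

/-- A divisor `D` on `H` is `G`-admissible if, for every edge `e` of `G`, `D` vanishes
at all interior vertices of the subdivision of `e`, except at most one where it
takes the value `1`. -/
def GAdm (G : Multigraph V E) (ℓ : E → ℕ) (D : VH V E ℓ → ℤ) : Prop :=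
  ∀ e : E,
    (∀ j : Fin (ℓ e - 1), D (Sum.inr ⟨e, j⟩) = 0) ∨
    (∃ j : Fin (ℓ e - 1), D (Sum.inr ⟨e, j⟩) = 1 ∧
      ∀ j' : Fin (ℓ e - 1), j' ≠ j → D (Sum.inr ⟨e, j'⟩) = 0)

/-- `F : V(H) → ℤ` is the canonical extension of `f : V(G) → ℤ` with respect to the
divisor `D` on `H`: it extends `f` and `D + div(F)` is `G`-admissible. -/
def IsCanExt (G : Multigraph V E) (ℓ : E → ℕ) (D : VH V E ℓ → ℤ) (f : V → ℤ)
    (F : VH V E ℓ → ℤ) : Prop :=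
  (∀ v : V, F (Sum.inl v) = f v) ∧ GAdm G ℓ (fun w => D w + divH G ℓ F w)

/-- Membership in the cut `C_v(D)` of a `G`-admissible divisor `D` at a vertex `v` of
`G`: it contains `v` itself and, for each oriented edge `e` with tail `v`, the interior
vertices `x_i^e` with `1 ≤ i ≤ j_e(v)`, where `j_e(v)` is the position of the (unique)
interior vertex of `e` where `D` takes the value `1` (and `j_e(v) = 0` if there is none).
(The pair `⟨e, j⟩` encodes the interior vertex at position `j+1` along the reference
orientation of `e`.) -/
def inCutAt (G : Multigraph V E) (ℓ : E → ℕ) (D : VH V E ℓ → ℤ) (v : V) :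
    VH V E ℓ → Prop := fun w =>
  match w with
  | Sum.inl u => u = v
  | Sum.inr p =>
      (G.tail p.1 = v ∧ ∃ j : Fin (ℓ p.1 - 1), D (Sum.inr ⟨p.1, j⟩) = 1 ∧ p.2 ≤ j) ∨
      (G.head p.1 = v ∧ ∃ j : Fin (ℓ p.1 - 1), D (Sum.inr ⟨p.1, j⟩) = 1 ∧ j ≤ p.2)

/-- The `G`-admissible chip-firing move of `D` at `v`:
`M_v(D) = D + div(χ_{C_v(D)})`. -/
noncomputable def Mv (G : Multigraph V E) (ℓ : E → ℕ) (D : VH V E ℓ → ℤ) (v : V) :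
    VH V E ℓ → ℤ := fun w =>
  D w + divH G ℓ (fun w' => if inCutAt G ℓ D v w' then 1 else 0) w

/-! ### Auxiliary machinery -/

/-- Admissibility of a sequence on the interior `[1, L)` of an edge of length `L`. -/
def AdmSeq (L : ℕ) (c : ℕ → ℤ) : Prop :=
  (∀ i, 1 ≤ i → i < L → c i = 0) ∨
  (∃ p, 1 ≤ p ∧ p < L ∧ c p = 1 ∧ ∀ i, 1 ≤ i → i < L → i ≠ p → c i = 0)

lemma AdmSeq.congr {L : ℕ} {c c' : ℕ → ℤ} (h : ∀ i, 1 ≤ i → i < L → c i = c' i) :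
    AdmSeq L c → AdmSeq L c' := by
  rintro (hc | ⟨p, hp1, hp2, hp3, hp4⟩)
  · exact Or.inl fun i h1 h2 => (h i h1 h2) ▸ hc i h1 h2
  · exact Or.inr ⟨p, hp1, hp2, (h p hp1 hp2) ▸ hp3,
      fun i h1 h2 hne => (h i h1 h2) ▸ hp4 i h1 h2 hne⟩

lemma admseq_single (L t : ℕ) (c : ℕ → ℤ)
    (h : ∀ n, 1 ≤ n → n < L → c n = if n = t then 1 else 0) : AdmSeq L c := by
  by_cases hh : 1 ≤ t ∧ t < L
  · refine Or.inr ⟨t, hh.1, hh.2, by rw [h t hh.1 hh.2]; simp, fun i h1 h2 hne => by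
      rw [h i h1 h2]; simp [hne]⟩
  · refine Or.inl fun i h1 h2 => ?_
    have : i ≠ t := by omega
    rw [h i h1 h2]; simp [this]

/-- The weighted sum of an admissible sequence. -/
lemma admseq_weight (L : ℕ) (c : ℕ → ℤ) (h : AdmSeq L c) :
    (∑ k ∈ Finset.Ico 1 L, ((L : ℤ) - k) * c k = 0 ∧
      ∀ i, 1 ≤ i → i < L → c i = 0) ∨
    (∃ p, 1 ≤ p ∧ p < L ∧ ∑ k ∈ Finset.Ico 1 L, ((L : ℤ) - k) * c k = (L : ℤ) - p ∧
      c p = 1 ∧ ∀ i, 1 ≤ i → i < L → i ≠ p → c i = 0) := by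
  rcases h with hc | ⟨p, hp1, hp2, hp3, hp4⟩
  · refine Or.inl ⟨Finset.sum_eq_zero fun k hk => ?_, hc⟩
    rw [Finset.mem_Ico] at hk
    rw [hc k hk.1 hk.2, mul_zero]
  · refine Or.inr ⟨p, hp1, hp2, ?_, hp3, hp4⟩
    rw [Finset.sum_eq_single_of_mem p (by simp [Finset.mem_Ico]; omega)]
    · rw [hp3, mul_one]
    · intro b hb hbne
      rw [Finset.mem_Ico] at hb
      rw [hp4 b hb.1 hb.2 hbne, mul_zero]

/-- Two-step induction helper. -/
lemma two_step {P : ℕ → Prop} (h0 : P 0) (h1 : P 1)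
    (hs : ∀ i, P i → P (i + 1) → P (i + 2)) : ∀ i, P i := by
  have key : ∀ i, P i ∧ P (i + 1) := by
    intro i
    induction i with
    | zero => exact ⟨h0, h1⟩
    | succ n ih => exact ⟨ih.2, hs n ih.1 ih.2⟩
  exact fun i => (key i).1

/-- Uniqueness of the canonical extension along a single edge. -/
lemma edge_unique (L : ℕ) (hL : 1 ≤ L) (a b d : ℕ → ℤ)
    (h0 : a 0 = b 0) (hE : a L = b L)
    (ha : AdmSeq L (fun i => d i + (a (i - 1) + a (i + 1) - 2 * a i)))
    (hb : AdmSeq L (fun i => d i + (b (i - 1) + b (i + 1) - 2 * b i))) :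
    ∀ i ≤ L, a i = b i := by
  set g : ℕ → ℤ := fun i => a i - b i with hg
  set u : ℕ → ℤ := fun i => (a (i - 1) + a (i + 1) - 2 * a i) -
    (b (i - 1) + b (i + 1) - 2 * b i) with hu
  have g0 : g 0 = 0 := by simp [hg, h0]
  have gL : g L = 0 := by simp [hg, hE]
  have hrec : ∀ i, 1 ≤ i → g (i + 1) = 2 * g i - g (i - 1) + u i := by
    intro i hi
    obtain ⟨m, rfl⟩ : ∃ m, i = m + 1 := ⟨i - 1, by omega⟩
    simp only [hg, hu, Nat.add_sub_cancel]
    ring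
  -- the fundamental formula
  have formula : ∀ i, g i = i * g 1 + ∑ k ∈ Finset.Ico 1 i, ((i : ℤ) - k) * u k := by
    refine two_step (by simp [g0]) (by simp) ?_
    intro i ih1 ih2
    have hrec' := hrec (i + 1) (by omega)
    simp only [Nat.add_sub_cancel] at hrec'
    rw [hrec', ih1, ih2]
    have hsplit1 : ∑ k ∈ Finset.Ico 1 (i + 2), ((i : ℤ) + 2 - k) * u k =
        (∑ k ∈ Finset.Ico 1 (i + 1), ((i : ℤ) + 2 - k) * u k) + 1 * u (i + 1) := by
      rw [Finset.sum_Ico_succ_top (by omega)]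
      push_cast; ring_nf
    have hsplit2 : ∀ (c : ℤ) (f : ℕ → ℤ), (∑ k ∈ Finset.Ico 1 (i + 1), (c - (k:ℤ)) * f k) =
        (∑ k ∈ Finset.Ico 1 i, (c - (k:ℤ)) * f k) + (if 1 ≤ i then (c - i) * f i else 0) := by
      intro c f
      rcases Nat.lt_or_ge i 1 with h | h
      · interval_cases i <;> simp
      · rw [Finset.sum_Ico_succ_top (by omega), if_pos h]
    push_cast
    rw [hsplit1, hsplit2, hsplit2]
    rcases Nat.lt_or_ge i 1 with h | h
    · interval_cases i <;> simp <;> ring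
    · have key : ∑ k ∈ Finset.Ico 1 i, ((i : ℤ) + 2 - k) * u k =
          2 * ∑ k ∈ Finset.Ico 1 i, ((i : ℤ) + 1 - k) * u k -
          ∑ k ∈ Finset.Ico 1 i, ((i : ℤ) - k) * u k := by
        rw [Finset.mul_sum, ← Finset.sum_sub_distrib]
        exact Finset.sum_congr rfl fun k _ => by ring
      split_ifs with hsi hsi2 hsi3 <;> try omega
      all_goals linarith [key]
  set ca : ℕ → ℤ := fun i => d i + (a (i - 1) + a (i + 1) - 2 * a i) with hca
  set cb : ℕ → ℤ := fun i => d i + (b (i - 1) + b (i + 1) - 2 * b i) with hcb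
  have hu2 : ∀ k, u k = ca k - cb k := by
    intro k; simp only [hu, hca, hcb]; ring
  have hS : ∑ k ∈ Finset.Ico 1 L, ((L:ℤ) - k) * u k
      = (∑ k ∈ Finset.Ico 1 L, ((L:ℤ) - k) * ca k)
        - ∑ k ∈ Finset.Ico 1 L, ((L:ℤ) - k) * cb k := by
    rw [← Finset.sum_sub_distrib]
    exact Finset.sum_congr rfl fun k _ => by rw [hu2]; ring
  have hLf := formula L
  rw [gL, hS] at hLf
  have bnds : ∀ (c : ℕ → ℤ), AdmSeq L c →
      0 ≤ (∑ k ∈ Finset.Ico 1 L, ((L:ℤ) - k) * c k) ∧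
      (∑ k ∈ Finset.Ico 1 L, ((L:ℤ) - k) * c k) < L := by
    intro c hc
    rcases admseq_weight L c hc with ⟨e1, _⟩ | ⟨p, hp1, hp2, e1, _, _⟩ <;> rw [e1]
    · exact ⟨le_refl 0, by exact_mod_cast hL⟩
    · have h1 : (p:ℤ) < L := by exact_mod_cast hp2
      have h2 : (1:ℤ) ≤ p := by exact_mod_cast hp1
      omega
  have cancel : g 1 = 0 ∧ (∑ k ∈ Finset.Ico 1 L, ((L:ℤ) - k) * ca k)
      = ∑ k ∈ Finset.Ico 1 L, ((L:ℤ) - k) * cb k := by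
    obtain ⟨hA1, hA2⟩ := bnds ca ha
    obtain ⟨hB1, hB2⟩ := bnds cb hb
    have hx : g 1 = 0 := by
      rcases lt_trichotomy (g 1) 0 with h' | h' | h'
      · exfalso
        have h1 : g 1 ≤ -1 := by omega
        nlinarith
      · exact h'
      · exfalso
        have h1 : 1 ≤ g 1 := by omega
        nlinarith
    refine ⟨hx, ?_⟩
    rw [hx] at hLf
    linarith
  have hsum := cancel.2
  have hcc : ∀ k, 1 ≤ k → k < L → ca k = cb k := by
    rcases admseq_weight L ca ha with ⟨e1, e2⟩ | ⟨p, hp1, hp2, e1, e2, e3⟩ <;>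
      rcases admseq_weight L cb hb with ⟨f1, f2⟩ | ⟨q, hq1, hq2, f1, f2, f3⟩ <;>
      intro k h1 h2
    · rw [e2 k h1 h2, f2 k h1 h2]
    · exfalso; rw [e1, f1] at hsum; omega
    · exfalso; rw [e1, f1] at hsum; omega
    · have hpq : p = q := by rw [e1, f1] at hsum; omega
      subst hpq
      by_cases hk : k = p
      · subst hk; rw [e2, f2]
      · rw [e3 k h1 h2 hk, f3 k h1 h2 hk]
  intro i hi
  have hgz : g i = 0 := by
    rw [formula i, cancel.1, Finset.sum_eq_zero, mul_zero, add_zero]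
    intro k hk
    rw [Finset.mem_Ico] at hk
    rw [hu2, hcc k hk.1 (lt_of_lt_of_le hk.2 hi), sub_self, mul_zero]
  simp only [hg] at hgz
  linarith

lemma xv_zero (G : Multigraph V E) (ℓ : E → ℕ) (e : E) :
    xv G ℓ e 0 = Sum.inl (G.tail e) := by
  simp [xv]

lemma xv_last (G : Multigraph V E) (ℓ : E → ℕ) (e : E) (h : 0 < ℓ e) :
    xv G ℓ e (ℓ e) = Sum.inl (G.head e) := by
  unfold xv
  rw [dif_neg (by omega), dif_neg (by omega)]

lemma xv_eq_inr_iff (G : Multigraph V E) (ℓ : E → ℕ) (e e' : E)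
    (i : Fin (ℓ e' - 1)) (j : ℕ) :
    xv G ℓ e j = Sum.inr ⟨e', i⟩ ↔ e = e' ∧ j = i.val + 1 := by
  unfold xv
  split_ifs with h h2
  · constructor
    · intro hh; simp at hh
    · rintro ⟨rfl, hj⟩; omega
  · constructor
    · intro hh
      injection hh with hh
      obtain ⟨he, hf⟩ := Sigma.mk.inj_iff.mp hh
      subst he
      have hval : j - 1 = i.val := by
        have := heq_iff_eq.mp hf
        exact congrArg Fin.val this
      exact ⟨rfl, by omega⟩
    · rintro ⟨rfl, rfl⟩
      have hfin : (⟨i.val + 1 - 1, by omega⟩ : Fin (ℓ e - 1)) = i := by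
        ext; simp
      exact congrArg (fun z => (Sum.inr ⟨e, z⟩ : VH V E ℓ)) hfin
  · constructor
    · intro hh; exact absurd hh (by simp)
    · rintro ⟨rfl, rfl⟩
      exfalso
      have := i.isLt
      omega

lemma xv_succ (G : Multigraph V E) (ℓ : E → ℕ) (e : E) (i : Fin (ℓ e - 1)) :
    xv G ℓ e (i.val + 1) = Sum.inr ⟨e, i⟩ :=
  (xv_eq_inr_iff G ℓ e e i (i.val + 1)).mpr ⟨rfl, rfl⟩

lemma xv_interior (G : Multigraph V E) (ℓ : E → ℕ) (e : E) (n : ℕ)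
    (h1 : 1 ≤ n) (h2 : n < ℓ e) :
    xv G ℓ e n = Sum.inr ⟨e, ⟨n - 1, by omega⟩⟩ := by
  obtain ⟨m, rfl⟩ : ∃ m, n = m + 1 := ⟨n - 1, by omega⟩
  exact xv_succ G ℓ e ⟨m, by omega⟩

lemma divH_inr (G : Multigraph V E) (ℓ : E → ℕ) (F : VH V E ℓ → ℤ) (e : E)
    (i : Fin (ℓ e - 1)) :
    divH G ℓ F (Sum.inr ⟨e, i⟩) =
      (F (xv G ℓ e (i.val + 2)) - F (xv G ℓ e (i.val + 1))) +
      (F (xv G ℓ e i.val) - F (xv G ℓ e (i.val + 1))) := by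
  have hL : i.val + 1 < ℓ e := by have := i.isLt; omega
  unfold divH
  rw [Finset.sum_eq_single_of_mem e (Finset.mem_univ e)]
  · rw [Finset.sum_add_distrib]
    have c1 : ∀ j, (xv G ℓ e j = Sum.inr ⟨e, i⟩) = (j = i.val + 1) := fun j => by
      rw [xv_eq_inr_iff]; simp
    have s1 : (∑ j ∈ Finset.range (ℓ e), if xv G ℓ e j = Sum.inr ⟨e, i⟩ then
        F (xv G ℓ e (j + 1)) - F (xv G ℓ e j) else 0) =
        F (xv G ℓ e (i.val + 2)) - F (xv G ℓ e (i.val + 1)) := by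
      rw [Finset.sum_eq_single_of_mem (i.val + 1) (Finset.mem_range.mpr hL)]
      · simp [c1]
      · intro b hb hne
        simp [c1, hne]
    have s2 : (∑ j ∈ Finset.range (ℓ e), if xv G ℓ e (j + 1) = Sum.inr ⟨e, i⟩ then
        F (xv G ℓ e j) - F (xv G ℓ e (j + 1)) else 0) =
        F (xv G ℓ e i.val) - F (xv G ℓ e (i.val + 1)) := by
      rw [Finset.sum_eq_single_of_mem i.val (Finset.mem_range.mpr (by omega))]
      · simp [c1]
      · intro b hb hne
        have : ¬ (b + 1 = i.val + 1) := by omega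
        simp [c1, this, hne]
    rw [s1, s2]
  · intro e' _ hne
    apply Finset.sum_eq_zero
    intro j _
    have n1 : xv G ℓ e' j ≠ Sum.inr ⟨e, i⟩ := by
      intro hh; exact hne ((xv_eq_inr_iff G ℓ e' e i j).mp hh).1
    have n2 : xv G ℓ e' (j + 1) ≠ Sum.inr ⟨e, i⟩ := by
      intro hh; exact hne ((xv_eq_inr_iff G ℓ e' e i (j + 1)).mp hh).1
    rw [if_neg n1, if_neg n2, add_zero]

lemma divH_interior (G : Multigraph V E) (ℓ : E → ℕ) (F : VH V E ℓ → ℤ) (e : E)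
    (n : ℕ) (h1 : 1 ≤ n) (h2 : n < ℓ e) :
    divH G ℓ F (xv G ℓ e n) =
      (F (xv G ℓ e (n + 1)) - F (xv G ℓ e n)) +
      (F (xv G ℓ e (n - 1)) - F (xv G ℓ e n)) := by
  obtain ⟨m, rfl⟩ : ∃ m, n = m + 1 := ⟨n - 1, by omega⟩
  conv_lhs => rw [show xv G ℓ e (m + 1) = Sum.inr ⟨e, ⟨m, by omega⟩⟩ from
    xv_succ G ℓ e ⟨m, by omega⟩, divH_inr]
  simp

lemma gadm_iff (G : Multigraph V E) (ℓ : E → ℕ) (D' : VH V E ℓ → ℤ) :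
    GAdm G ℓ D' ↔ ∀ e, AdmSeq (ℓ e) (fun n => D' (xv G ℓ e n)) := by
  constructor
  · intro h e
    rcases h e with hz | ⟨j, hj1, hj0⟩
    · left
      intro n hn1 hn2
      show D' (xv G ℓ e n) = 0
      rw [xv_interior G ℓ e n hn1 hn2]
      exact hz _
    · right
      have hjL := j.isLt
      refine ⟨j.val + 1, by omega, by omega, ?_, ?_⟩
      · show D' (xv G ℓ e (j.val + 1)) = 1
        rw [xv_succ]; exact hj1
      · intro n hn1 hn2 hne
        show D' (xv G ℓ e n) = 0
        rw [xv_interior G ℓ e n hn1 hn2]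
        apply hj0
        intro hc
        apply hne
        have := congrArg Fin.val hc
        simp at this
        omega
  · intro h e
    rcases h e with hz | ⟨p, hp1, hp2, hp3, hp4⟩
    · left
      intro j
      have hjL := j.isLt
      have h0 : D' (xv G ℓ e (j.val + 1)) = 0 := hz (j.val + 1) (by omega) (by omega)
      rwa [xv_succ] at h0
    · right
      refine ⟨⟨p - 1, by omega⟩, ?_, ?_⟩
      · have h1 : D' (xv G ℓ e p) = 1 := hp3
        rwa [xv_interior G ℓ e p hp1 hp2] at h1
      · intro j' hne
        have hjL := j'.isLt
        have h0 : D' (xv G ℓ e (j'.val + 1)) = 0 :=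
          hp4 (j'.val + 1) (by omega) (by omega) (by
            intro hc
            apply hne
            have : j'.val = p - 1 := by omega
            exact Fin.ext this)
        rwa [xv_succ] at h0

lemma canext_unique (G : Multigraph V E) (ℓ : E → ℕ) (hℓ : ∀ e, 0 < ℓ e)
    (D : VH V E ℓ → ℤ) (f : V → ℤ) (F1 F2 : VH V E ℓ → ℤ)
    (h1 : IsCanExt G ℓ D f F1) (h2 : IsCanExt G ℓ D f F2) : F1 = F2 := by
  have key : ∀ e, ∀ n ≤ ℓ e, F1 (xv G ℓ e n) = F2 (xv G ℓ e n) := by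
    intro e
    have adm : ∀ (F : VH V E ℓ → ℤ), GAdm G ℓ (fun w => D w + divH G ℓ F w) →
        AdmSeq (ℓ e) (fun i => D (xv G ℓ e i) +
          (F (xv G ℓ e (i - 1)) + F (xv G ℓ e (i + 1)) - 2 * F (xv G ℓ e i))) := by
      intro F hF
      refine AdmSeq.congr ?_ (((gadm_iff G ℓ _).mp hF) e)
      intro n hn1 hn2
      rw [divH_interior G ℓ F e n hn1 hn2]
      ring
    exact edge_unique (ℓ e) (hℓ e) _ _ (fun n => D (xv G ℓ e n))
      (by rw [xv_zero, h1.1, h2.1])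
      (by rw [xv_last _ _ _ (hℓ e), h1.1, h2.1])
      (adm F1 h1.2) (adm F2 h2.2)
  funext w
  cases w with
  | inl u => rw [h1.1, h2.1]
  | inr p =>
    obtain ⟨e, i⟩ := p
    have hiL := i.isLt
    have := key e (i.val + 1) (by omega)
    rwa [xv_succ] at this

lemma cut_canext (G : Multigraph V E) (ℓ : E → ℕ) (hℓ : ∀ e, 0 < ℓ e)
    (D : VH V E ℓ → ℤ) (hD : GAdm G ℓ D) (v : V) :
    IsCanExt G ℓ D (fun u => if u = v then 1 else 0)
      (fun w => if inCutAt G ℓ D v w then 1 else 0) := by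
  set χ : VH V E ℓ → ℤ := fun w => if inCutAt G ℓ D v w then 1 else 0 with hχ
  constructor
  · intro u; by_cases hu : u = v <;> simp [hχ, inCutAt, hu]
  · rw [gadm_iff]
    intro e
    have hL : 0 < ℓ e := hℓ e
    have hχ0 : χ (xv G ℓ e 0) = if G.tail e = v then 1 else 0 := by
      rw [xv_zero]; by_cases hu : G.tail e = v <;> simp [hχ, inCutAt, hu]
    have hχL : χ (xv G ℓ e (ℓ e)) = if G.head e = v then 1 else 0 := by
      rw [xv_last G ℓ e hL]; by_cases hu : G.head e = v <;> simp [hχ, inCutAt, hu]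
    have hχint : ∀ m, 1 ≤ m → m < ℓ e → χ (xv G ℓ e m) =
        if (G.tail e = v ∧ ∃ j : Fin (ℓ e - 1), D (Sum.inr ⟨e, j⟩) = 1 ∧ m - 1 ≤ j.val)
          ∨ (G.head e = v ∧ ∃ j : Fin (ℓ e - 1), D (Sum.inr ⟨e, j⟩) = 1 ∧ j.val ≤ m - 1)
        then 1 else 0 := by
      intro m h1 h2
      rw [xv_interior G ℓ e m h1 h2]
      simp only [hχ]
      split_ifs with hA hB hC
      · rfl
      · exact absurd hA hB
      · exact absurd hC hA
      · rfl
    rcases hD e with hz | ⟨p, hp1, hp0⟩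
    · -- no chip on e
      have hD0 : ∀ n, 1 ≤ n → n < ℓ e → D (xv G ℓ e n) = 0 := by
        intro n h1 h2; rw [xv_interior G ℓ e n h1 h2]; exact hz _
      have hnochip : ∀ (j : Fin (ℓ e - 1)), D (Sum.inr ⟨e, j⟩) ≠ 1 := by
        intro j hj; rw [hz j] at hj; omega
      by_cases htv : G.tail e = v
      · have hhv : G.head e ≠ v := fun hh => G.loopless e (htv.trans hh.symm)
        have χm : ∀ m, m ≤ ℓ e → χ (xv G ℓ e m) = if m = 0 then 1 else 0 := by
          intro m hm
          rcases Nat.eq_zero_or_pos m with rfl | hm1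
          · rw [hχ0, if_pos htv, if_pos rfl]
          rcases Nat.lt_or_ge m (ℓ e) with hmL | hmL
          · rw [hχint m hm1 hmL, if_neg, if_neg (by omega)]
            rintro (⟨-, j, hj, -⟩ | ⟨hh, -⟩)
            · exact hnochip j hj
            · exact hhv hh
          · have : m = ℓ e := by omega
            subst this
            rw [hχL, if_neg hhv, if_neg (by omega)]
        refine admseq_single (ℓ e) 1 _ ?_
        intro n h1 h2
        have hb1 : n ≤ ℓ e := by omega
        have hb2 : n + 1 ≤ ℓ e := by omega
        have hb3 : n - 1 ≤ ℓ e := by omega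
        rw [divH_interior G ℓ χ e n h1 h2, hD0 n h1 h2,
          χm n hb1, χm (n + 1) hb2, χm (n - 1) hb3]
        split_ifs <;> first | omega | simp_all
      · by_cases hhv : G.head e = v
        · have χm : ∀ m, m ≤ ℓ e → χ (xv G ℓ e m) = if m = ℓ e then 1 else 0 := by
            intro m hm
            rcases Nat.eq_zero_or_pos m with rfl | hm1
            · rw [hχ0, if_neg htv, if_neg (by omega)]
            rcases Nat.lt_or_ge m (ℓ e) with hmL | hmL
            · rw [hχint m hm1 hmL, if_neg, if_neg (by omega)]
              rintro (⟨ht, -⟩ | ⟨-, j, hj, -⟩)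
              · exact htv ht
              · exact hnochip j hj
            · have : m = ℓ e := by omega
              subst this
              rw [hχL, if_pos hhv, if_pos rfl]
          refine admseq_single (ℓ e) (ℓ e - 1) _ ?_
          intro n h1 h2
          rw [divH_interior G ℓ χ e n h1 h2, hD0 n h1 h2,
            χm n (by omega), χm (n + 1) (by omega), χm (n - 1) (by omega)]
          split_ifs <;> first | omega | simp_all
        · -- neither endpoint is v : χ vanishes on the whole edge
          have χm : ∀ m, m ≤ ℓ e → χ (xv G ℓ e m) = 0 := by
            intro m hm
            rcases Nat.eq_zero_or_pos m with rfl | hm1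
            · rw [hχ0, if_neg htv]
            rcases Nat.lt_or_ge m (ℓ e) with hmL | hmL
            · rw [hχint m hm1 hmL, if_neg]
              rintro (⟨ht, -⟩ | ⟨hh, -⟩)
              · exact htv ht
              · exact hhv hh
            · have : m = ℓ e := by omega
              subst this
              rw [hχL, if_neg hhv]
          refine admseq_single (ℓ e) 0 _ ?_
          intro n h1 h2
          rw [divH_interior G ℓ χ e n h1 h2, hD0 n h1 h2,
            χm n (by omega), χm (n + 1) (by omega), χm (n - 1) (by omega)]
          split_ifs <;> first | omega | simp_all
    · -- chip at position p
      have hpL := p.isLt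
      have hDval : ∀ n, 1 ≤ n → n < ℓ e →
          D (xv G ℓ e n) = if n = p.val + 1 then 1 else 0 := by
        intro n h1 h2
        rw [xv_interior G ℓ e n h1 h2]
        by_cases hnp : n = p.val + 1
        · have hfp : (⟨n - 1, by omega⟩ : Fin (ℓ e - 1)) = p := Fin.ext (by simp; omega)
          rw [hfp, if_pos hnp]; exact hp1
        · rw [if_neg hnp]
          refine hp0 _ ?_
          intro hc
          apply hnp
          have := congrArg Fin.val hc
          simp at this
          omega
      have hex1 : ∀ m : ℕ, (∃ j : Fin (ℓ e - 1), D (Sum.inr ⟨e, j⟩) = 1 ∧ m ≤ j.val)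
          ↔ m ≤ p.val := by
        intro m
        constructor
        · rintro ⟨j, hj, hmj⟩
          by_cases hjp : j = p
          · subst hjp; exact hmj
          · rw [hp0 j hjp] at hj; omega
        · intro hm; exact ⟨p, hp1, hm⟩
      have hex2 : ∀ m : ℕ, (∃ j : Fin (ℓ e - 1), D (Sum.inr ⟨e, j⟩) = 1 ∧ j.val ≤ m)
          ↔ p.val ≤ m := by
        intro m
        constructor
        · rintro ⟨j, hj, hmj⟩
          by_cases hjp : j = p
          · subst hjp; exact hmj
          · rw [hp0 j hjp] at hj; omega
        · intro hm; exact ⟨p, hp1, hm⟩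
      by_cases htv : G.tail e = v
      · have hhv : G.head e ≠ v := fun hh => G.loopless e (htv.trans hh.symm)
        have χm : ∀ m, m ≤ ℓ e → χ (xv G ℓ e m) =
            if m ≤ p.val + 1 then 1 else 0 := by
          intro m hm
          rcases Nat.eq_zero_or_pos m with rfl | hm1
          · rw [hχ0, if_pos htv, if_pos (by omega)]
          rcases Nat.lt_or_ge m (ℓ e) with hmL | hmL
          · rw [hχint m hm1 hmL]
            have : ((G.tail e = v ∧ ∃ j : Fin (ℓ e - 1),
                D (Sum.inr ⟨e, j⟩) = 1 ∧ m - 1 ≤ j.val)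
                ∨ (G.head e = v ∧ ∃ j : Fin (ℓ e - 1),
                  D (Sum.inr ⟨e, j⟩) = 1 ∧ j.val ≤ m - 1)) ↔ (m ≤ p.val + 1) := by
              rw [hex1, hex2]
              constructor
              · rintro (⟨-, h⟩ | ⟨hh, -⟩)
                · omega
                · exact absurd hh hhv
              · intro h; exact Or.inl ⟨htv, by omega⟩
            simp only [this]
          · have : m = ℓ e := by omega
            subst this
            rw [hχL, if_neg hhv, if_neg (by omega)]
        refine admseq_single (ℓ e) (p.val + 2) _ ?_
        intro n h1 h2
        rw [divH_interior G ℓ χ e n h1 h2, hDval n h1 h2,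
          χm n (by omega), χm (n + 1) (by omega), χm (n - 1) (by omega)]
        split_ifs <;> first | omega | simp_all
      · by_cases hhv : G.head e = v
        · have χm : ∀ m, m ≤ ℓ e → χ (xv G ℓ e m) =
              if p.val + 1 ≤ m then 1 else 0 := by
            intro m hm
            rcases Nat.eq_zero_or_pos m with rfl | hm1
            · rw [hχ0, if_neg htv, if_neg (by omega)]
            rcases Nat.lt_or_ge m (ℓ e) with hmL | hmL
            · rw [hχint m hm1 hmL]
              have : ((G.tail e = v ∧ ∃ j : Fin (ℓ e - 1),
                  D (Sum.inr ⟨e, j⟩) = 1 ∧ m - 1 ≤ j.val)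
                  ∨ (G.head e = v ∧ ∃ j : Fin (ℓ e - 1),
                    D (Sum.inr ⟨e, j⟩) = 1 ∧ j.val ≤ m - 1)) ↔ (p.val + 1 ≤ m) := by
                rw [hex1, hex2]
                constructor
                · rintro (⟨ht, -⟩ | ⟨-, h⟩)
                  · exact absurd ht htv
                  · omega
                · intro h; exact Or.inr ⟨hhv, by omega⟩
              simp only [this]
            · have : m = ℓ e := by omega
              subst this
              rw [hχL, if_pos hhv, if_pos (by omega)]
          refine admseq_single (ℓ e) p.val _ ?_
          intro n h1 h2
          rw [divH_interior G ℓ χ e n h1 h2, hDval n h1 h2,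
            χm n (by omega), χm (n + 1) (by omega), χm (n - 1) (by omega)]
          split_ifs <;> first | omega | simp_all
        · -- neither endpoint is v
          have χm : ∀ m, m ≤ ℓ e → χ (xv G ℓ e m) = 0 := by
            intro m hm
            rcases Nat.eq_zero_or_pos m with rfl | hm1
            · rw [hχ0, if_neg htv]
            rcases Nat.lt_or_ge m (ℓ e) with hmL | hmL
            · rw [hχint m hm1 hmL, if_neg]
              rintro (⟨ht, -⟩ | ⟨hh, -⟩)
              · exact htv ht
              · exact hhv hh
            · have : m = ℓ e := by omega
              subst this
              rw [hχL, if_neg hhv]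
          refine admseq_single (ℓ e) (p.val + 1) _ ?_
          intro n h1 h2
          rw [divH_interior G ℓ χ e n h1 h2, hDval n h1 h2,
            χm n (by omega), χm (n + 1) (by omega), χm (n - 1) (by omega)]
          split_ifs <;> first | omega | simp_all

/-- let `canExt D f` denote the canonical extension of `f` with respect
to `D`, so that `div_ℓ(f; D) = div(canExt D f)`. For every `G`-admissible divisor `D`
on `H` and every vertex `v` of `G`, the divisor `M_v(D)` is `G`-admissible and
`M_v(D) = D + div_ℓ(χ_v; D)`. -/
theorem stmt4 (G : Multigraph V E) (hG : G.Conn) (ℓ : E → ℕ) (hℓ : ∀ e, 0 < ℓ e)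
    (canExt : (VH V E ℓ → ℤ) → (V → ℤ) → (VH V E ℓ → ℤ))
    (hcan : ∀ (D : VH V E ℓ → ℤ) (f : V → ℤ), IsCanExt G ℓ D f (canExt D f))
    (D : VH V E ℓ → ℤ) (hD : GAdm G ℓ D) (v : V) :
    GAdm G ℓ (Mv G ℓ D v) ∧
    ∀ w, Mv G ℓ D v w =
      D w + divH G ℓ (canExt D (fun u => if u = v then 1 else 0)) w := by
  have hcut := cut_canext G ℓ hℓ D hD v
  have huniq := canext_unique G ℓ hℓ D (fun u => if u = v then 1 else 0)
    (fun w => if inCutAt G ℓ D v w then 1 else 0)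
    (canExt D (fun u => if u = v then 1 else 0)) hcut
    (hcan D (fun u => if u = v then 1 else 0))
  refine ⟨hcut.2, ?_⟩
  intro w
  show D w + divH G ℓ (fun w' => if inCutAt G ℓ D v w' then 1 else 0) w = _
  rw [← huniq]
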